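/- Let c, s, τ be positive integers with 1 ≤ τ ≤ s, set d = c·s and s₁ = max(1, s−1). Let A be an n×d real matrix with no zero rows. For each row j let ω_j = #{(l,i) : A_{j,(l,i)} ≠ 0}, ω'_j = #{l : A_{j,(l,i)} ≠ 0 for some i}, and α*_j = 1 + (τ−1)(ω_j−1)/s₁ + (τ/s − (τ−1)/s₁)·((ω'_j−1)/ω'_j)·ω_j. Define D¹_ii = ∑_{j=1}^n α*_j A_{ji}². Then for every h ∈ ℝ^d, the average over all distributed samplings of (h^Ŝ)ᵀAᵀA h^Ŝ is at most (τ/s)·∑_{i=1}^d D¹_ii h_i². -/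

import Mathlib

open Finset

/-- The finite set of all distributed samplings: tuples `S = (S_1,…,S_c)` where
each `S_l` is a `τ`-element subset of the block `{1,…,s}`. -/
def samplings (c s τ : ℕ) : Finset (Fin c → Finset (Fin s)) :=
  Finset.univ.filter fun S => ∀ l, (S l).card = τ

/-- `h^Ŝ`: the vector agreeing with `h` on `Ŝ = {(l,i) : i ∈ S_l}` and `0` elsewhere. -/
def restr {c s : ℕ} (S : Fin c → Finset (Fin s)) (x : Fin c × Fin s → ℝ) :
    Fin c × Fin s → ℝ :=
  fun p => if p.2 ∈ S p.1 then x p else 0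

lemma count_subsets {α : Type*} [DecidableEq α] (u v : Finset α) (k : ℕ)
    (hvu : v ⊆ u) (hk : v.card ≤ k) :
    (((u.powersetCard k)).filter (fun T => v ⊆ T)).card
      = (u.card - v.card).choose (k - v.card) := by
  rw [← Finset.card_sdiff_of_subset hvu, ← Finset.card_powersetCard]
  apply Finset.card_nbij' (fun T => T \ v) (fun W => W ∪ v)
  · intro T hT
    simp only [Finset.mem_coe, Finset.mem_filter, Finset.mem_powersetCard] at hT
    obtain ⟨⟨hTu, hTcard⟩, hvT⟩ := hT
    rw [Finset.mem_coe, Finset.mem_powersetCard]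
    exact ⟨Finset.sdiff_subset_sdiff hTu (le_refl v), by rw [Finset.card_sdiff_of_subset hvT, hTcard]⟩
  · intro W hW
    rw [Finset.mem_coe, Finset.mem_powersetCard] at hW
    obtain ⟨hWu, hWcard⟩ := hW
    have hdisj : Disjoint W v := Finset.disjoint_of_subset_left hWu (Finset.sdiff_disjoint)
    rw [Finset.mem_coe, Finset.mem_filter, Finset.mem_powersetCard]
    refine ⟨⟨Finset.union_subset (hWu.trans (Finset.sdiff_subset)) hvu, ?_⟩, Finset.subset_union_right⟩
    rw [Finset.card_union_of_disjoint hdisj, hWcard]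
    omega
  · intro T hT
    simp only [Finset.mem_coe, Finset.mem_filter, Finset.mem_powersetCard] at hT
    exact Finset.sdiff_union_of_subset hT.2
  · intro W hW
    rw [Finset.mem_coe, Finset.mem_powersetCard] at hW
    have hdisj : Disjoint W v := Finset.disjoint_of_subset_left hW.1 (Finset.sdiff_disjoint)
    exact Finset.union_sdiff_cancel_right hdisj

lemma count_subsets_zero {α : Type*} [DecidableEq α] (u v : Finset α) (k : ℕ)
    (hk : k < v.card) :
    (((u.powersetCard k)).filter (fun T => v ⊆ T)).card = 0 := by
  rw [Finset.card_eq_zero, Finset.filter_eq_empty_iff]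
  intro T hT hvT
  rw [Finset.mem_powersetCard] at hT
  have := Finset.card_le_card hvT
  omega



lemma samplings_eq (c s τ : ℕ) :
    samplings c s τ = Fintype.piFinset (fun _ : Fin c => (univ : Finset (Fin s)).powersetCard τ) := by
  ext S
  simp [samplings, Finset.mem_powersetCard]

lemma sum_ind_one (s τ : ℕ) (hτ : 1 ≤ τ) (hτs : τ ≤ s) (i : Fin s) :
    ∑ T ∈ (univ : Finset (Fin s)).powersetCard τ, (if i ∈ T then (1:ℝ) else 0)
      = ((s-1).choose (τ-1) : ℝ) := by
  rw [Finset.sum_boole]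
  norm_cast
  have : ∀ T : Finset (Fin s), i ∈ T ↔ {i} ⊆ T := by simp
  simp only [this]
  rw [count_subsets _ _ _ (by simp) (by simpa)]
  simp

lemma sum_ind_two (s τ : ℕ) (i i' : Fin s) (hne : i ≠ i') :
    ∑ T ∈ (univ : Finset (Fin s)).powersetCard τ,
      (if i ∈ T then (1:ℝ) else 0) * (if i' ∈ T then (1:ℝ) else 0)
      = if 2 ≤ τ then ((s-2).choose (τ-2) : ℝ) else 0 := by
  have hrw : ∀ T : Finset (Fin s),
      (if i ∈ T then (1:ℝ) else 0) * (if i' ∈ T then (1:ℝ) else 0)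
      = if ({i, i'} : Finset (Fin s)) ⊆ T then 1 else 0 := by
    intro T
    by_cases h1 : i ∈ T <;> by_cases h2 : i' ∈ T <;> simp [h1, h2, Finset.insert_subset_iff]
  simp only [hrw]
  rw [Finset.sum_boole]
  have hcard : ({i, i'} : Finset (Fin s)).card = 2 := Finset.card_pair hne
  by_cases hτ2 : 2 ≤ τ
  · rw [count_subsets _ _ _ (by simp) (by omega), hcard]
    simp [hτ2, Finset.card_univ]
  · rw [count_subsets_zero _ _ _ (by omega)]
    simp [hτ2]

lemma prod_one_special {c : ℕ} (l : Fin c) (x K : ℝ) :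
    ∏ m : Fin c, (if m = l then x else K) = x * K^(c-1) := by
  rw [← Finset.mul_prod_erase univ _ (Finset.mem_univ l), if_pos rfl]
  congr 1
  rw [Finset.prod_congr rfl (fun m hm => if_neg (Finset.ne_of_mem_erase hm)),
    Finset.prod_const, Finset.card_erase_of_mem (Finset.mem_univ l), Finset.card_univ,
    Fintype.card_fin]

lemma prod_two_special {c : ℕ} (l l' : Fin c) (hne : l ≠ l') (x y K : ℝ) :
    ∏ m : Fin c, (if m = l then x else if m = l' then y else K) = x * y * K^(c-2) := by
  rw [← Finset.mul_prod_erase univ _ (Finset.mem_univ l), if_pos rfl]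
  have hl' : l' ∈ univ.erase l := Finset.mem_erase.2 ⟨hne.symm, Finset.mem_univ l'⟩
  rw [← Finset.mul_prod_erase _ _ hl', if_neg hne.symm, if_pos rfl, ← mul_assoc]
  congr 1
  rw [Finset.prod_congr rfl (fun m hm => ?_), Finset.prod_const,
    Finset.card_erase_of_mem hl', Finset.card_erase_of_mem (Finset.mem_univ l),
    Finset.card_univ, Fintype.card_fin]
  · rfl
  · have h1 := Finset.ne_of_mem_erase hm
    have h2 := Finset.ne_of_mem_erase (Finset.mem_of_mem_erase hm)
    rw [if_neg h2, if_neg h1]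

lemma nat_id1 (s τ : ℕ) (hs : 0 < s) (hτ : 1 ≤ τ) :
    s * (s-1).choose (τ-1) = s.choose τ * τ := by
  have := Nat.add_one_mul_choose_eq (s-1) (τ-1)
  have h1 : s - 1 + 1 = s := by omega
  have h2 : τ - 1 + 1 = τ := by omega
  rw [h1, h2] at this
  exact this

lemma sum_one_pc (s τ : ℕ) :
    ∑ _T ∈ (univ : Finset (Fin s)).powersetCard τ, (1:ℝ) = (s.choose τ : ℝ) := by
  rw [Finset.sum_const, Finset.card_powersetCard, Finset.card_univ, Fintype.card_fin,
    nsmul_eq_mul, mul_one]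

lemma N_val (c s τ : ℕ) (hs : 0 < s) (hτ : 1 ≤ τ) (hτs : τ ≤ s) (p q : Fin c × Fin s) :
    ∑ S ∈ samplings c s τ,
      (if p.2 ∈ S p.1 then (1:ℝ) else 0) * (if q.2 ∈ S q.1 then (1:ℝ) else 0)
    = (s.choose τ : ℝ)^c *
        (((τ:ℝ)/(s:ℝ))^2
          + ((τ:ℝ)*((τ:ℝ)-1)/((s:ℝ)*((max 1 (s-1) : ℕ):ℝ)) - ((τ:ℝ)/(s:ℝ))^2)
              * (if p.1 = q.1 then 1 else 0)
          + ((τ:ℝ)/(s:ℝ) - (τ:ℝ)*((τ:ℝ)-1)/((s:ℝ)*((max 1 (s-1):ℕ):ℝ)))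
              * (if p = q then 1 else 0)) := by
  have hc : 0 < c := p.1.pos
  have hK : (0:ℝ) < (s.choose τ : ℝ) := by exact_mod_cast Nat.choose_pos hτs
  have hKc1 : (s.choose τ : ℝ)^c = (s.choose τ : ℝ)^(c-1) * (s.choose τ : ℝ) := by
    rw [← pow_succ]; congr 1; omega
  have hid1 : (s:ℝ) * ((s-1).choose (τ-1) : ℝ) = (s.choose τ : ℝ) * (τ:ℝ) := by
    exact_mod_cast nat_id1 s τ hs hτ
  have hs0 : (s:ℝ) ≠ 0 := by positivity
  have hτ0 : (0:ℝ) < (τ:ℝ) := by exact_mod_cast hτ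
  by_cases hpq : p = q
  · -- diagonal case
    subst hpq
    set g : Fin c → Finset (Fin s) → ℝ :=
      fun m T => if m = p.1 then (if p.2 ∈ T then (1:ℝ) else 0) else 1 with hg
    have step1 : ∑ S ∈ samplings c s τ,
        (if p.2 ∈ S p.1 then (1:ℝ) else 0) * (if p.2 ∈ S p.1 then (1:ℝ) else 0)
        = ∏ m : Fin c, ∑ T ∈ (univ : Finset (Fin s)).powersetCard τ, g m T := by
      rw [samplings_eq, Finset.prod_univ_sum]
      refine Finset.sum_congr rfl fun S _ => ?_
      rw [Finset.prod_eq_single p.1 (fun b _ hb => if_neg hb) (by simp)]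
      simp only [if_pos rfl]
      by_cases hmem : p.2 ∈ S p.1 <;> simp [hmem]
    rw [step1, Finset.prod_congr rfl (fun m _ => show _ =
        (if m = p.1 then (((s-1).choose (τ-1) : ℝ)) else (s.choose τ : ℝ)) from ?_),
      prod_one_special]
    · have harith : ((τ:ℝ)/(s:ℝ))^2
          + ((τ:ℝ)*((τ:ℝ)-1)/((s:ℝ)*((max 1 (s-1) : ℕ):ℝ)) - ((τ:ℝ)/(s:ℝ))^2) * (if (p.1 = p.1) then (1:ℝ) else 0)
          + ((τ:ℝ)/(s:ℝ) - (τ:ℝ)*((τ:ℝ)-1)/((s:ℝ)*((max 1 (s-1):ℕ):ℝ))) * (if (p = p) then (1:ℝ) else 0)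
          = (τ:ℝ)/(s:ℝ) := by
        rw [if_pos rfl, if_pos rfl]; ring
      rw [harith, hKc1]
      field_simp
      linear_combination hid1
    · by_cases hm : m = p.1
      · rw [if_pos hm, hg]; simp only [if_pos hm]
        rw [sum_ind_one s τ hτ hτs]
      · rw [if_neg hm, hg]; simp only [if_neg hm]
        exact sum_one_pc s τ
  · -- off-diagonal
    rw [if_neg hpq, mul_zero, add_zero]
    by_cases hblock : p.1 = q.1
    · -- same block, different coordinate
      have hne2 : p.2 ≠ q.2 := fun h2 => hpq (Prod.ext hblock h2)
      have hs2 : 2 ≤ s := by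
        have : Nontrivial (Fin s) := ⟨⟨p.2, q.2, hne2⟩⟩
        have := Fintype.one_lt_card (α := Fin s)
        simp at this; omega
      have hmax : ((max 1 (s-1) : ℕ):ℝ) = (s:ℝ) - 1 := by
        have hm : max 1 (s-1) = s - 1 := by omega
        rw [hm, Nat.cast_sub hs]
        norm_num
      set g : Fin c → Finset (Fin s) → ℝ :=
        fun m T => if m = p.1 then
          (if p.2 ∈ T then (1:ℝ) else 0) * (if q.2 ∈ T then (1:ℝ) else 0) else 1 with hg
      have step1 : ∑ S ∈ samplings c s τ,
          (if p.2 ∈ S p.1 then (1:ℝ) else 0) * (if q.2 ∈ S q.1 then (1:ℝ) else 0)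
          = ∏ m : Fin c, ∑ T ∈ (univ : Finset (Fin s)).powersetCard τ, g m T := by
        rw [samplings_eq, Finset.prod_univ_sum]
        refine Finset.sum_congr rfl fun S _ => ?_
        rw [Finset.prod_eq_single p.1 (fun b _ hb => if_neg hb) (by simp)]
        simp only [if_pos rfl, ← hblock, if_true]
      rw [step1, Finset.prod_congr rfl (fun m _ => show _ =
          (if m = p.1 then (if 2 ≤ τ then ((s-2).choose (τ-2) : ℝ) else 0)
            else (s.choose τ : ℝ)) from ?_),
        prod_one_special]
      · rw [if_pos hblock]
        have harith : ((τ:ℝ)/(s:ℝ))^2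
            + ((τ:ℝ)*((τ:ℝ)-1)/((s:ℝ)*((max 1 (s-1) : ℕ):ℝ)) - ((τ:ℝ)/(s:ℝ))^2) * 1
            = (τ:ℝ)*((τ:ℝ)-1)/((s:ℝ)*((max 1 (s-1) : ℕ):ℝ)) := by ring
        rw [harith, hmax, hKc1]
        have hs1 : (s:ℝ) - 1 ≠ 0 := by
          have : (2:ℝ) ≤ (s:ℝ) := by exact_mod_cast hs2
          linarith
        by_cases hτ2 : 2 ≤ τ
        · rw [if_pos hτ2]
          have e1 : (s-1) * (s-2).choose (τ-2) = (s-1).choose (τ-1) * (τ-1) := by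
            have := Nat.add_one_mul_choose_eq (s-2) (τ-2)
            have h1 : s - 2 + 1 = s - 1 := by omega
            have h2 : τ - 2 + 1 = τ - 1 := by omega
            rw [h1, h2] at this
            exact this
          have hid2 : ((s:ℝ)-1) * ((s-2).choose (τ-2) : ℝ)
              = ((s-1).choose (τ-1) : ℝ) * ((τ:ℝ)-1) := by
            have := congrArg (Nat.cast (R := ℝ)) e1
            push_cast [Nat.cast_sub hs, Nat.cast_sub hτ] at this
            convert this using 2 <;> push_cast [Nat.cast_sub hs2, Nat.cast_sub hτ2] <;> ring
          field_simp
          linear_combination ((s:ℝ) * hid2 + ((τ:ℝ)-1) * hid1)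
        · rw [if_neg hτ2]
          have : (τ:ℝ) - 1 = 0 := by
            have : τ = 1 := by omega
            rw [this]; norm_num
          rw [this]
          ring
      · by_cases hm : m = p.1
        · rw [if_pos hm, hg]; simp only [if_pos hm]
          rw [sum_ind_two s τ p.2 q.2 hne2]
        · rw [if_neg hm, hg]; simp only [if_neg hm]
          exact sum_one_pc s τ
    · -- different blocks
      have hc2 : 2 ≤ c := by
        have : Nontrivial (Fin c) := ⟨⟨p.1, q.1, hblock⟩⟩
        have := Fintype.one_lt_card (α := Fin c)
        simp at this; omega
      set g : Fin c → Finset (Fin s) → ℝ :=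
        fun m T => if m = p.1 then (if p.2 ∈ T then (1:ℝ) else 0)
          else if m = q.1 then (if q.2 ∈ T then (1:ℝ) else 0) else 1 with hg
      have step1 : ∑ S ∈ samplings c s τ,
          (if p.2 ∈ S p.1 then (1:ℝ) else 0) * (if q.2 ∈ S q.1 then (1:ℝ) else 0)
          = ∏ m : Fin c, ∑ T ∈ (univ : Finset (Fin s)).powersetCard τ, g m T := by
        rw [samplings_eq, Finset.prod_univ_sum]
        refine Finset.sum_congr rfl fun S _ => ?_
        have : ∀ m : Fin c, g m (S m)
            = (if m = p.1 then (if p.2 ∈ S p.1 then (1:ℝ) else 0)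
              else if m = q.1 then (if q.2 ∈ S q.1 then (1:ℝ) else 0) else 1) := by
          intro m
          by_cases h1 : m = p.1
          · simp [hg, h1]
          · by_cases h2 : m = q.1
            · have hqp : q.1 ≠ p.1 := fun hh => hblock hh.symm
              simp [hg, h1, h2, hqp]
            · simp [hg, h1, h2]
        rw [Finset.prod_congr rfl (fun m _ => this m), prod_two_special p.1 q.1 hblock]
        rw [one_pow, mul_one]
      rw [step1, Finset.prod_congr rfl (fun m _ => show _ =
          (if m = p.1 then (((s-1).choose (τ-1) : ℝ))
            else if m = q.1 then (((s-1).choose (τ-1) : ℝ)) else (s.choose τ : ℝ)) from ?_),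
        prod_two_special p.1 q.1 hblock]
      · rw [if_neg hblock, mul_zero, add_zero]
        have hKc2 : (s.choose τ : ℝ)^c
            = (s.choose τ : ℝ)^(c-2) * ((s.choose τ : ℝ) * (s.choose τ : ℝ)) := by
          rw [← mul_assoc, ← pow_succ, ← pow_succ]; congr 1; omega
        rw [hKc2]
        field_simp
        linear_combination ((s:ℝ) * ((s-1).choose (τ-1) : ℝ) + (s.choose τ:ℝ) * (τ:ℝ)) * hid1
      · by_cases h1 : m = p.1
        · rw [if_pos h1, hg]; simp only [if_pos h1]
          rw [sum_ind_one s τ hτ hτs]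
        · rw [if_neg h1, hg]; simp only [if_neg h1]
          by_cases h2 : m = q.1
          · rw [if_pos h2]; simp only [if_pos h2]
            rw [sum_ind_one s τ hτ hτs]
          · rw [if_neg h2]; simp only [if_neg h2]
            exact sum_one_pc s τ

lemma expand_sum (c s : ℕ) (a : Fin c × Fin s → ℝ) (x y z : ℝ) :
    ∑ p : Fin c × Fin s, ∑ q : Fin c × Fin s, a p * a q *
      (x + y * (if p.1 = q.1 then 1 else 0) + z * (if p = q then 1 else 0))
    = x * (∑ p : Fin c × Fin s, a p)^2
      + y * (∑ l : Fin c, (∑ i : Fin s, a (l,i))^2)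
      + z * (∑ p : Fin c × Fin s, (a p)^2) := by
  have e1 : ∑ p : Fin c × Fin s, ∑ q : Fin c × Fin s, a p * a q * x
      = x * (∑ p : Fin c × Fin s, a p)^2 := by
    rw [sq, Finset.sum_mul_sum, Finset.mul_sum]
    refine Finset.sum_congr rfl fun p _ => ?_
    rw [Finset.mul_sum]
    refine Finset.sum_congr rfl fun q _ => ?_
    ring
  have e2 : ∑ p : Fin c × Fin s, ∑ q : Fin c × Fin s,
        a p * a q * (y * (if p.1 = q.1 then 1 else 0))
      = y * (∑ l : Fin c, (∑ i : Fin s, a (l,i))^2) := by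
    rw [Fintype.sum_prod_type, Finset.mul_sum]
    refine Finset.sum_congr rfl fun l _ => ?_
    have inner : ∀ i : Fin s,
        ∑ q : Fin c × Fin s, a (l,i) * a q * (y * (if l = q.1 then 1 else 0))
        = a (l,i) * (∑ i' : Fin s, a (l,i')) * y := by
      intro i
      rw [Fintype.sum_prod_type]
      simp only [mul_ite, mul_one, mul_zero]
      have pull : ∀ l' : Fin c,
          ∑ i' : Fin s, (if l = l' then a (l,i) * a (l',i') * y else 0)
          = if l = l' then ∑ i' : Fin s, a (l,i) * a (l,i') * y else 0 := by
        intro l'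
        split_ifs with hh
        · subst hh; rfl
        · simp
      rw [Finset.sum_congr rfl fun l' _ => pull l', Finset.sum_ite_eq]
      simp only [Finset.mem_univ, if_true]
      rw [← Finset.sum_mul, ← Finset.mul_sum]
    rw [Finset.sum_congr rfl fun i _ => inner i, ← Finset.sum_mul, ← Finset.sum_mul, sq]
    ring
  have e3 : ∑ p : Fin c × Fin s, ∑ q : Fin c × Fin s,
        a p * a q * (z * (if p = q then 1 else 0))
      = z * (∑ p : Fin c × Fin s, (a p)^2) := by
    rw [Finset.mul_sum]
    refine Finset.sum_congr rfl fun p _ => ?_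
    simp only [mul_ite, mul_one, mul_zero]
    rw [Finset.sum_ite_eq univ p (fun q => a p * a q * z)]
    simp only [Finset.mem_univ, if_true]
    ring
  calc ∑ p : Fin c × Fin s, ∑ q : Fin c × Fin s, a p * a q *
      (x + y * (if p.1 = q.1 then 1 else 0) + z * (if p = q then 1 else 0))
      = (∑ p : Fin c × Fin s, ∑ q : Fin c × Fin s, a p * a q * x)
        + (∑ p : Fin c × Fin s, ∑ q : Fin c × Fin s,
            a p * a q * (y * (if p.1 = q.1 then 1 else 0)))
        + (∑ p : Fin c × Fin s, ∑ q : Fin c × Fin s,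
            a p * a q * (z * (if p = q then 1 else 0))) := by
        rw [← Finset.sum_add_distrib, ← Finset.sum_add_distrib]
        refine Finset.sum_congr rfl fun p _ => ?_
        rw [← Finset.sum_add_distrib, ← Finset.sum_add_distrib]
        refine Finset.sum_congr rfl fun q _ => ?_
        ring
    _ = _ := by rw [e1, e2, e3]

lemma row_bound (β γ w w' A2 B2 T : ℝ) (hβ : 0 ≤ β) (hβγ : β ≤ γ) (hw' : 1 ≤ w')
    (hA2 : 0 ≤ A2) (h1 : T^2 ≤ w * A2) (h2 : T^2 ≤ w' * B2) :
    γ^2 * T^2 + (γ*β - γ^2) * B2 + (γ - γ*β) * A2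
      ≤ γ * (1 + β*(w-1) + (γ-β)*((w'-1)/w')*w) * A2 := by
  have hγ : 0 ≤ γ := le_trans hβ hβγ
  have hw'0 : (0:ℝ) < w' := lt_of_lt_of_le one_pos hw'
  have hTB : T^2 - B2 ≤ (w'-1)/w' * T^2 := by
    rw [div_mul_eq_mul_div, le_div_iff₀ hw'0]
    nlinarith
  have hδ0 : 0 ≤ (w'-1)/w' := div_nonneg (by linarith) (le_of_lt hw'0)
  have hTB2 : T^2 - B2 ≤ (w'-1)/w' * (w * A2) :=
    le_trans hTB (mul_le_mul_of_nonneg_left h1 hδ0)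
  calc γ^2 * T^2 + (γ*β - γ^2) * B2 + (γ - γ*β) * A2
      = γ*β * T^2 + γ*(γ-β) * (T^2 - B2) + (γ - γ*β) * A2 := by ring
    _ ≤ γ*β * (w * A2) + γ*(γ-β) * ((w'-1)/w' * (w * A2)) + (γ - γ*β) * A2 := by
        refine add_le_add (add_le_add ?_ ?_) le_rfl
        · exact mul_le_mul_of_nonneg_left h1 (mul_nonneg hγ hβ)
        · exact mul_le_mul_of_nonneg_left hTB2 (mul_nonneg hγ (by linarith))
    _ = γ * (1 + β*(w-1) + (γ-β)*((w'-1)/w')*w) * A2 := by ring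


/-- the key inequality (8) of Theorem 2 of the paper.
Columns of the `n×d` matrix `A` are indexed by `(l,i) ∈ Fin c × Fin s`,
`d = c·s`, `s₁ = max(1,s−1)`.  With `ω_j` the number of nonzeros of row `j`,
`ω'_j` its number of active blocks,
`α*_j = 1 + (τ−1)(ω_j−1)/s₁ + (τ/s − (τ−1)/s₁)·((ω'_j−1)/ω'_j)·ω_j`, and
`D¹_ii = ∑_j α*_j A_{ji}²`, for every `h` the average over all distributed
samplings of `(h^Ŝ)ᵀAᵀA h^Ŝ` is at most `(τ/s)·∑_i D¹_ii h_i²`. -/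
theorem stmt_5 (c s τ : ℕ) (hc : 0 < c) (hs : 0 < s) (hτ : 1 ≤ τ) (hτs : τ ≤ s)
    (n : ℕ) (A : Matrix (Fin n) (Fin c × Fin s) ℝ)
    (hrows : ∀ j : Fin n, ∃ p : Fin c × Fin s, A j p ≠ 0)
    (ω ω' : Fin n → ℕ)
    (hω : ∀ j, ω j = (Finset.univ.filter fun p : Fin c × Fin s => A j p ≠ 0).card)
    (hω' : ∀ j, ω' j = (Finset.univ.filter fun l : Fin c => ∃ i : Fin s, A j (l, i) ≠ 0).card)
    (h : Fin c × Fin s → ℝ) :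
    (∑ S ∈ samplings c s τ,
        ∑ j : Fin n, (∑ p : Fin c × Fin s, A j p * restr S h p) ^ 2) /
        ((s.choose τ : ℝ) ^ c) ≤
      ((τ : ℝ) / (s : ℝ)) *
        ∑ p : Fin c × Fin s,
          (∑ j : Fin n,
            (1 + ((τ : ℝ) - 1) * ((ω j : ℝ) - 1) / ((max 1 (s - 1) : ℕ) : ℝ)
              + ((τ : ℝ) / (s : ℝ) - ((τ : ℝ) - 1) / ((max 1 (s - 1) : ℕ) : ℝ)) *
                  (((ω' j : ℝ) - 1) / (ω' j : ℝ)) * (ω j : ℝ)) * (A j p) ^ 2) *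
          (h p) ^ 2 := by
  have hK : (0:ℝ) < (s.choose τ : ℝ) := by exact_mod_cast Nat.choose_pos hτs
  have hKc : (0:ℝ) < (s.choose τ : ℝ)^c := pow_pos hK c
  have hs₁ : (1:ℝ) ≤ ((max 1 (s-1) : ℕ) : ℝ) := by exact_mod_cast Nat.le_max_left 1 (s-1)
  have hs₁0 : ((max 1 (s-1) : ℕ) : ℝ) ≠ 0 := by linarith
  have hs0 : (s:ℝ) ≠ 0 := by positivity
  have hτ1 : (1:ℝ) ≤ (τ:ℝ) := by exact_mod_cast hτ
  set s₁ : ℝ := ((max 1 (s-1) : ℕ) : ℝ) with hs₁def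
  set γ : ℝ := (τ:ℝ)/(s:ℝ) with hγdef
  set β : ℝ := ((τ:ℝ)-1)/s₁ with hβdef
  have hβ0 : 0 ≤ β := div_nonneg (by linarith) (by linarith)
  have hβγ : β ≤ γ := by
    rcases Nat.lt_or_ge s 2 with h2 | h2
    · have hseq : s = 1 := by omega
      have hτeq : τ = 1 := by omega
      have hone : s₁ = 1 := by rw [hs₁def, hseq]; norm_num
      rw [hβdef, hγdef, hone, hseq, hτeq]; norm_num
    · have hs₁eq : s₁ = (s:ℝ) - 1 := by
        rw [hs₁def]
        have hm : max 1 (s-1) = s - 1 := by omega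
        rw [hm, Nat.cast_sub hs]; norm_num
      rw [hβdef, hγdef, hs₁eq, div_le_div_iff₀ (by linarith) (by positivity)]
      have hτs' : (τ:ℝ) ≤ (s:ℝ) := by exact_mod_cast hτs
      nlinarith
  -- abbreviations per row
  have key : ∀ j : Fin n,
      ∑ S ∈ samplings c s τ, (∑ p : Fin c × Fin s, A j p * restr S h p)^2
      = (s.choose τ : ℝ)^c *
          (γ^2 * (∑ p : Fin c × Fin s, A j p * h p)^2
            + (γ*β - γ^2) * (∑ l : Fin c, (∑ i : Fin s, A j (l,i) * h (l,i))^2)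
            + (γ - γ*β) * (∑ p : Fin c × Fin s, (A j p * h p)^2)) := by
    intro j
    have ha : ∀ (S : Fin c → Finset (Fin s)) (p : Fin c × Fin s),
        A j p * restr S h p = A j p * h p * (if p.2 ∈ S p.1 then 1 else 0) := by
      intro S p
      rw [restr]
      by_cases hm : p.2 ∈ S p.1 <;> simp [hm]
    calc ∑ S ∈ samplings c s τ, (∑ p : Fin c × Fin s, A j p * restr S h p)^2
        = ∑ S ∈ samplings c s τ, ∑ p : Fin c × Fin s, ∑ q : Fin c × Fin s,
            (A j p * h p) * (A j q * h q) *
            ((if p.2 ∈ S p.1 then (1:ℝ) else 0) * (if q.2 ∈ S q.1 then (1:ℝ) else 0)) := by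
          refine Finset.sum_congr rfl fun S _ => ?_
          rw [sq, Finset.sum_mul_sum]
          refine Finset.sum_congr rfl fun p _ => Finset.sum_congr rfl fun q _ => ?_
          rw [ha, ha]; ring
      _ = ∑ p : Fin c × Fin s, ∑ q : Fin c × Fin s,
            (A j p * h p) * (A j q * h q) *
            (∑ S ∈ samplings c s τ,
              (if p.2 ∈ S p.1 then (1:ℝ) else 0) * (if q.2 ∈ S q.1 then (1:ℝ) else 0)) := by
          rw [Finset.sum_comm]
          refine Finset.sum_congr rfl fun p _ => ?_
          rw [Finset.sum_comm]
          refine Finset.sum_congr rfl fun q _ => ?_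
          rw [Finset.mul_sum]
      _ = ∑ p : Fin c × Fin s, ∑ q : Fin c × Fin s,
            (s.choose τ : ℝ)^c * ((A j p * h p) * (A j q * h q) *
            (γ^2 + (γ*β - γ^2) * (if p.1 = q.1 then 1 else 0)
              + (γ - γ*β) * (if p = q then 1 else 0))) := by
          refine Finset.sum_congr rfl fun p _ => Finset.sum_congr rfl fun q _ => ?_
          rw [N_val c s τ hs hτ hτs p q]
          have hγβ : γ*β = (τ:ℝ)*((τ:ℝ)-1)/((s:ℝ)*s₁) := by
            rw [hγdef, hβdef, div_mul_div_comm]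
          rw [hγβ, hγdef]
          ring
      _ = (s.choose τ : ℝ)^c * ∑ p : Fin c × Fin s, ∑ q : Fin c × Fin s,
            ((A j p * h p) * (A j q * h q) *
            (γ^2 + (γ*β - γ^2) * (if p.1 = q.1 then 1 else 0)
              + (γ - γ*β) * (if p = q then 1 else 0))) := by
          rw [Finset.mul_sum]
          exact Finset.sum_congr rfl fun p _ => (Finset.mul_sum _ _ _).symm
      _ = _ := by rw [expand_sum c s (fun p => A j p * h p) (γ^2) (γ*β - γ^2) (γ - γ*β)]
  -- Cauchy–Schwarz facts per row
  have hw'1 : ∀ j, (1:ℝ) ≤ (ω' j : ℝ) := by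
    intro j
    have hpos : 0 < ω' j := by
      rw [hω' j, Finset.card_pos]
      obtain ⟨p, hp⟩ := hrows j
      exact ⟨p.1, Finset.mem_filter.2 ⟨Finset.mem_univ _, ⟨p.2, hp⟩⟩⟩
    exact_mod_cast hpos
  have hT1 : ∀ j, (∑ p : Fin c × Fin s, A j p * h p)^2
      ≤ (ω j : ℝ) * ∑ p : Fin c × Fin s, (A j p * h p)^2 := by
    intro j
    have hsub : ∑ p : Fin c × Fin s, A j p * h p
        = ∑ p ∈ Finset.univ.filter (fun p : Fin c × Fin s => A j p ≠ 0), A j p * h p :=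
      (Finset.sum_filter_of_ne (fun p _ hne => by
        intro hA0; exact hne (by rw [hA0, zero_mul]))).symm
    rw [hsub]
    calc (∑ p ∈ Finset.univ.filter (fun p : Fin c × Fin s => A j p ≠ 0), A j p * h p)^2
        ≤ (Finset.univ.filter (fun p : Fin c × Fin s => A j p ≠ 0)).card *
            ∑ p ∈ Finset.univ.filter (fun p : Fin c × Fin s => A j p ≠ 0), (A j p * h p)^2 :=
          sq_sum_le_card_mul_sum_sq
      _ ≤ (ω j : ℝ) * ∑ p : Fin c × Fin s, (A j p * h p)^2 := by
          rw [hω j]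
          refine mul_le_mul_of_nonneg_left ?_ (by positivity)
          exact Finset.sum_le_sum_of_subset_of_nonneg (Finset.filter_subset _ _)
            (fun p _ _ => sq_nonneg _)
  have hT2 : ∀ j, (∑ p : Fin c × Fin s, A j p * h p)^2
      ≤ (ω' j : ℝ) * ∑ l : Fin c, (∑ i : Fin s, A j (l,i) * h (l,i))^2 := by
    intro j
    have hsub : ∑ p : Fin c × Fin s, A j p * h p
        = ∑ l ∈ Finset.univ.filter (fun l : Fin c => ∃ i : Fin s, A j (l,i) ≠ 0),
            ∑ i : Fin s, A j (l,i) * h (l,i) := by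
      rw [Fintype.sum_prod_type]
      exact (Finset.sum_filter_of_ne (fun l _ hne => by
        by_contra hno
        push_neg at hno
        exact hne (Finset.sum_eq_zero fun i _ => by rw [hno i, zero_mul]))).symm
    rw [hsub]
    calc (∑ l ∈ Finset.univ.filter (fun l : Fin c => ∃ i : Fin s, A j (l,i) ≠ 0),
            ∑ i : Fin s, A j (l,i) * h (l,i))^2
        ≤ (Finset.univ.filter (fun l : Fin c => ∃ i : Fin s, A j (l,i) ≠ 0)).card *
            ∑ l ∈ Finset.univ.filter (fun l : Fin c => ∃ i : Fin s, A j (l,i) ≠ 0),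
              (∑ i : Fin s, A j (l,i) * h (l,i))^2 :=
          sq_sum_le_card_mul_sum_sq
      _ ≤ (ω' j : ℝ) * ∑ l : Fin c, (∑ i : Fin s, A j (l,i) * h (l,i))^2 := by
          rw [hω' j]
          refine mul_le_mul_of_nonneg_left ?_ (by positivity)
          exact Finset.sum_le_sum_of_subset_of_nonneg (Finset.filter_subset _ _)
            (fun l _ _ => sq_nonneg _)
  -- rewrite the numerator and cancel the division
  have hNum : ∑ S ∈ samplings c s τ,
      ∑ j : Fin n, (∑ p : Fin c × Fin s, A j p * restr S h p) ^ 2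
      = (s.choose τ : ℝ)^c * ∑ j : Fin n,
          (γ^2 * (∑ p : Fin c × Fin s, A j p * h p)^2
            + (γ*β - γ^2) * (∑ l : Fin c, (∑ i : Fin s, A j (l,i) * h (l,i))^2)
            + (γ - γ*β) * (∑ p : Fin c × Fin s, (A j p * h p)^2)) := by
    rw [Finset.sum_comm, Finset.mul_sum]
    exact Finset.sum_congr rfl fun j _ => key j
  rw [hNum, mul_comm, mul_div_assoc, div_self (ne_of_gt hKc), mul_one]
  -- final comparison
  calc ∑ j : Fin n,
        (γ^2 * (∑ p : Fin c × Fin s, A j p * h p)^2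
          + (γ*β - γ^2) * (∑ l : Fin c, (∑ i : Fin s, A j (l,i) * h (l,i))^2)
          + (γ - γ*β) * (∑ p : Fin c × Fin s, (A j p * h p)^2))
      ≤ ∑ j : Fin n, γ * ((1 + ((τ:ℝ)-1) * ((ω j : ℝ)-1) / s₁
          + (γ - β) * (((ω' j : ℝ)-1)/(ω' j : ℝ)) * (ω j : ℝ))
            * ∑ p : Fin c × Fin s, (A j p * h p)^2) := by
        refine Finset.sum_le_sum fun j _ => ?_
        have hQ0 : 0 ≤ ∑ p : Fin c × Fin s, (A j p * h p)^2 :=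
          Finset.sum_nonneg fun p _ => sq_nonneg _
        have := row_bound β γ (ω j : ℝ) (ω' j : ℝ)
          (∑ p : Fin c × Fin s, (A j p * h p)^2)
          (∑ l : Fin c, (∑ i : Fin s, A j (l,i) * h (l,i))^2)
          (∑ p : Fin c × Fin s, A j p * h p)
          hβ0 hβγ (hw'1 j) hQ0 (hT1 j) (hT2 j)
        refine le_trans this (le_of_eq ?_)
        rw [hβdef]
        ring
    _ = γ * ∑ p : Fin c × Fin s,
          (∑ j : Fin n,
            (1 + ((τ : ℝ) - 1) * ((ω j : ℝ) - 1) / s₁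
              + (γ - β) * (((ω' j : ℝ) - 1) / (ω' j : ℝ)) * (ω j : ℝ)) * (A j p) ^ 2) *
          (h p) ^ 2 := by
        rw [Finset.mul_sum]
        have swap : ∑ p : Fin c × Fin s,
            γ * ((∑ j : Fin n,
              (1 + ((τ : ℝ) - 1) * ((ω j : ℝ) - 1) / s₁
                + (γ - β) * (((ω' j : ℝ) - 1) / (ω' j : ℝ)) * (ω j : ℝ)) * (A j p) ^ 2) *
              (h p) ^ 2)
            = ∑ p : Fin c × Fin s, ∑ j : Fin n,
              γ * ((1 + ((τ : ℝ) - 1) * ((ω j : ℝ) - 1) / s₁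
                + (γ - β) * (((ω' j : ℝ) - 1) / (ω' j : ℝ)) * (ω j : ℝ)) * ((A j p * h p) ^ 2)) := by
          refine Finset.sum_congr rfl fun p _ => ?_
          rw [Finset.sum_mul, Finset.mul_sum]
          exact Finset.sum_congr rfl fun j _ => by ring
        rw [show (∑ p : Fin c × Fin s,
            γ * ((∑ j : Fin n,
              (1 + ((τ : ℝ) - 1) * ((ω j : ℝ) - 1) / s₁
                + (γ - β) * (((ω' j : ℝ) - 1) / (ω' j : ℝ)) * (ω j : ℝ)) * (A j p) ^ 2) *
              (h p) ^ 2)) = _ from swap, Finset.sum_comm]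
        refine Finset.sum_congr rfl fun j _ => ?_
        rw [Finset.mul_sum, Finset.mul_sum]
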